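/- Let K ≥ 1 be an integer and let A be a random variable uniformly distributed on the integers {-K, -K+1, …, K}. Then max_{x∈ℤ} P(A = x) = 1/(2K+1) ≤ 1 - 4K/(2K+1)², and for every real t, |E[exp(2πi A t)]|² ≤ 1 - 4K/(2K+1)² + (4K/(2K+1)²)·cos(2πt). In particular, if β is the symmetric random variable taking values 1 and -1 each with probability 2K/(2K+1)² and 0 with probability 1 - 4K/(2K+1)², then |E[exp(2πi A t)]|² ≤ E[exp(2πi β t)] for all real t. -/

import Mathlib

open MeasureTheory Real

lemma int_finsupp {Ω : Type} [MeasurableSpace Ω] (μ : Measure Ω) [IsFiniteMeasure μ]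
    (A : Ω → ℤ) (hA : Measurable A) (S : Finset ℤ)
    (hS : μ {ω | A ω ∉ S} = 0) (g : ℤ → ℂ) :
    ∫ ω, g (A ω) ∂μ = ∑ x ∈ S, (μ {ω | A ω = x}).toReal • g x := by
  have hmeas : ∀ x : ℤ, MeasurableSet {ω | A ω = x} :=
    fun x => hA (measurableSet_singleton x)
  have hae : (fun ω => g (A ω)) =ᵐ[μ]
      (fun ω => ∑ x ∈ S, Set.indicator {ω | A ω = x} (fun _ => g x) ω) := by
    rw [Filter.EventuallyEq, ae_iff]
    refine measure_mono_null ?_ hS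
    intro ω hω
    simp only [Set.mem_setOf_eq] at hω ⊢
    intro hmem
    apply hω
    rw [Finset.sum_eq_single (A ω)]
    · rw [Set.indicator_of_mem]
      exact rfl
    · intro b _ hb
      exact Set.indicator_of_notMem (fun h => hb (Eq.symm h)) _
    · exact fun h => absurd hmem h
  rw [integral_congr_ae hae, integral_finset_sum]
  · exact Finset.sum_congr rfl fun x _ => integral_indicator_const (g x) (hmeas x)
  · intro x _
    exact (integrable_const (g x)).indicator (hmeas x)

lemma cos_sum_bound (K : ℕ) (hK : 1 ≤ K) (θ : ℝ) :
    ∑ a ∈ Finset.Icc (-(K:ℤ)) K, ∑ b ∈ Finset.Icc (-(K:ℤ)) K, Real.cos (((a:ℝ) - b) * θ)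
      ≤ (2*(K:ℝ)+1)^2 - 4*K + 4*K * Real.cos θ := by
  classical
  set S : Finset ℤ := Finset.Icc (-(K:ℤ)) K with hS
  set F : ℤ × ℤ → ℝ := fun p => Real.cos (((p.1:ℝ) - p.2) * θ) with hF
  have hcard : S.card = 2*K+1 := by
    rw [hS, Int.card_Icc]; omega
  set T1 : Finset (ℤ×ℤ) := (Finset.Icc (-(K:ℤ)) (K-1)).image (fun a => (a, a+1)) with hT1
  set T2 : Finset (ℤ×ℤ) := (Finset.Icc (-(K:ℤ)+1) K).image (fun a => (a, a-1)) with hT2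
  have hinj1 : Function.Injective (fun a : ℤ => (a, a+1)) := by
    intro x y h; simpa [Prod.ext_iff] using h
  have hinj2 : Function.Injective (fun a : ℤ => (a, a-1)) := by
    intro x y h; simpa [Prod.ext_iff] using h
  have hsub : T1 ∪ T2 ⊆ S ×ˢ S := by
    intro p hp
    rcases Finset.mem_union.1 hp with h | h <;>
      obtain ⟨a, ha, rfl⟩ := Finset.mem_image.1 h <;>
      simp only [Finset.mem_Icc] at ha <;>
      simp only [Finset.mem_product, hS, Finset.mem_Icc] <;> omega
  have hdisj : Disjoint T1 T2 := by
    rw [Finset.disjoint_left]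
    rintro p h1 h2
    obtain ⟨a, _, rfl⟩ := Finset.mem_image.1 h1
    obtain ⟨b, _, hb⟩ := Finset.mem_image.1 h2
    simp only [Prod.ext_iff] at hb
    omega
  have hc1 : (Finset.Icc (-(K:ℤ)) (K-1)).card = 2*K := by rw [Int.card_Icc]; omega
  have hc2 : (Finset.Icc (-(K:ℤ)+1) K).card = 2*K := by rw [Int.card_Icc]; omega
  have hsum1 : ∑ p ∈ T1, F p = 2*(K:ℝ) * Real.cos θ := by
    rw [hT1, Finset.sum_image (fun x _ y _ h => hinj1 h)]
    have heq : ∀ a ∈ Finset.Icc (-(K:ℤ)) (K-1), F (a, a+1) = Real.cos θ := by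
      intro a _
      show Real.cos (((a:ℝ) - ((a+1 : ℤ) : ℝ)) * θ) = _
      rw [show ((a:ℝ) - ((a+1 : ℤ) : ℝ)) * θ = -θ by push_cast; ring, Real.cos_neg]
    rw [Finset.sum_congr rfl heq, Finset.sum_const, hc1, nsmul_eq_mul]
    push_cast; ring
  have hsum2 : ∑ p ∈ T2, F p = 2*(K:ℝ) * Real.cos θ := by
    rw [hT2, Finset.sum_image (fun x _ y _ h => hinj2 h)]
    have heq : ∀ a ∈ Finset.Icc (-(K:ℤ)+1) K, F (a, a-1) = Real.cos θ := by
      intro a _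
      show Real.cos (((a:ℝ) - ((a-1 : ℤ) : ℝ)) * θ) = _
      rw [show ((a:ℝ) - ((a-1 : ℤ) : ℝ)) * θ = θ by push_cast; ring]
    rw [Finset.sum_congr rfl heq, Finset.sum_const, hc2, nsmul_eq_mul]
    push_cast; ring
  have hcardT : (T1 ∪ T2).card = 4*K := by
    rw [Finset.card_union_of_disjoint hdisj, hT1, hT2,
      Finset.card_image_of_injective _ hinj1, Finset.card_image_of_injective _ hinj2,
      hc1, hc2]
    omega
  have hcardP : (S ×ˢ S).card = (2*K+1)^2 := by
    rw [Finset.card_product, hcard]; ring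
  have hrw : ∑ a ∈ S, ∑ b ∈ S, Real.cos (((a:ℝ) - b) * θ) = ∑ p ∈ S ×ˢ S, F p :=
    (Finset.sum_product S S F).symm
  rw [hrw, ← Finset.sum_sdiff hsub, Finset.sum_union hdisj, hsum1, hsum2]
  have hb1 : ∑ p ∈ S ×ˢ S \ (T1 ∪ T2), F p ≤ ((2*K+1)^2 - 4*K : ℕ) := by
    calc ∑ p ∈ S ×ˢ S \ (T1 ∪ T2), F p ≤ (S ×ˢ S \ (T1 ∪ T2)).card • (1:ℝ) :=
          Finset.sum_le_card_nsmul _ _ 1 (fun p _ => Real.cos_le_one _)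
      _ = ((2*K+1)^2 - 4*K : ℕ) := by
          rw [Finset.card_sdiff_of_subset hsub, hcardT, hcardP, nsmul_eq_mul, mul_one]
  have hcast : (((2*K+1)^2 - 4*K : ℕ) : ℝ) = (2*(K:ℝ)+1)^2 - 4*K := by
    have h4 : 4*K ≤ (2*K+1)^2 := by nlinarith
    push_cast [Nat.cast_sub h4]; ring
  linarith [hb1, hcast ▸ hb1]

lemma exp_re_eq (x : ℤ) (t : ℝ) :
    (Complex.exp (2 * (Real.pi : ℂ) * Complex.I * (x : ℂ) * (t : ℂ))).re
      = Real.cos ((x:ℝ) * (2 * Real.pi * t)) := by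
  rw [show 2 * (Real.pi : ℂ) * Complex.I * (x : ℂ) * (t : ℂ)
      = (((x:ℝ) * (2 * Real.pi * t) : ℝ) : ℂ) * Complex.I by push_cast; ring,
    Complex.exp_ofReal_mul_I_re]

lemma exp_mul_conj (a b : ℤ) (t : ℝ) :
    (Complex.exp (2 * (Real.pi : ℂ) * Complex.I * (a : ℂ) * (t : ℂ)) *
      (starRingEnd ℂ) (Complex.exp (2 * (Real.pi : ℂ) * Complex.I * (b : ℂ) * (t : ℂ)))).re
      = Real.cos (((a:ℝ) - b) * (2 * Real.pi * t)) := by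
  rw [← Complex.exp_conj, ← Complex.exp_add]
  have h : 2 * (Real.pi : ℂ) * Complex.I * (a : ℂ) * (t : ℂ)
      + (starRingEnd ℂ) (2 * (Real.pi : ℂ) * Complex.I * (b : ℂ) * (t : ℂ))
      = ((((a:ℝ) - b) * (2 * Real.pi * t) : ℝ) : ℂ) * Complex.I := by
    simp only [map_mul, Complex.conj_I, Complex.conj_ofReal, map_intCast, map_ofNat]
    push_cast
    ring
  rw [h, Complex.exp_ofReal_mul_I_re]

lemma norm_sq_sum_exp (K : ℕ) (hK : 1 ≤ K) (t : ℝ) :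
    ‖∑ a ∈ Finset.Icc (-(K:ℤ)) K,
        Complex.exp (2 * (Real.pi : ℂ) * Complex.I * (a : ℂ) * (t : ℂ))‖ ^ 2
      = ∑ a ∈ Finset.Icc (-(K:ℤ)) K, ∑ b ∈ Finset.Icc (-(K:ℤ)) K,
          Real.cos (((a:ℝ) - b) * (2 * Real.pi * t)) := by
  set S : Finset ℤ := Finset.Icc (-(K:ℤ)) K
  set e : ℤ → ℂ := fun a => Complex.exp (2 * (Real.pi : ℂ) * Complex.I * (a : ℂ) * (t : ℂ))
    with he
  have h1 : ‖∑ a ∈ S, e a‖ ^ 2 = ((∑ a ∈ S, e a) * (starRingEnd ℂ) (∑ a ∈ S, e a)).re := by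
    rw [Complex.mul_conj, Complex.ofReal_re, ← Complex.sq_norm]
  rw [h1, map_sum, Finset.sum_mul_sum, Complex.re_sum]
  refine Finset.sum_congr rfl fun a _ => ?_
  rw [Complex.re_sum]
  exact Finset.sum_congr rfl fun b _ => exp_mul_conj a b t

theorem stmt_6 (K : ℕ) (hK : 1 ≤ K)
    {Ω : Type} [MeasurableSpace Ω] (μ : Measure Ω) [IsProbabilityMeasure μ]
    (A : Ω → ℤ) (hA : Measurable A)
    -- `A` is uniformly distributed on `{-K, …, K}`
    (hdist : ∀ x : ℤ, (μ {ω | A ω = x}).toReal =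
      if |x| ≤ (K : ℤ) then 1 / (2 * (K : ℝ) + 1) else 0) :
    -- `max_x P(A = x) = 1/(2K+1)`
    IsGreatest (Set.range fun x : ℤ => (μ {ω | A ω = x}).toReal) (1 / (2 * (K : ℝ) + 1)) ∧
    -- `1/(2K+1) ≤ 1 - 4K/(2K+1)²`
    1 / (2 * (K : ℝ) + 1) ≤ 1 - 4 * (K : ℝ) / (2 * (K : ℝ) + 1) ^ 2 ∧
    -- `|E[exp(2πiAt)]|² ≤ 1 - 4K/(2K+1)² + (4K/(2K+1)²)·cos(2πt)`
    (∀ t : ℝ,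
      ‖∫ ω, Complex.exp (2 * (Real.pi : ℂ) * Complex.I * (A ω : ℂ) * (t : ℂ)) ∂μ‖ ^ 2 ≤
        1 - 4 * (K : ℝ) / (2 * (K : ℝ) + 1) ^ 2 +
          (4 * (K : ℝ) / (2 * (K : ℝ) + 1) ^ 2) * Real.cos (2 * Real.pi * t)) ∧
    -- in particular, `|E[exp(2πiAt)]|² ≤ E[exp(2πiβt)]` for `β` symmetric on `{-1,0,1}`
    -- taking the values `±1` with probability `2K/(2K+1)²` each
    (∀ {Ω' : Type} [MeasurableSpace Ω'] (μ' : Measure Ω') [IsProbabilityMeasure μ']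
      (β : Ω' → ℤ), Measurable β →
      (μ' {ω | β ω = 1}).toReal = 2 * (K : ℝ) / (2 * (K : ℝ) + 1) ^ 2 →
      (μ' {ω | β ω = -1}).toReal = 2 * (K : ℝ) / (2 * (K : ℝ) + 1) ^ 2 →
      (μ' {ω | β ω = 0}).toReal = 1 - 4 * (K : ℝ) / (2 * (K : ℝ) + 1) ^ 2 →
      ∀ t : ℝ,
        ‖∫ ω, Complex.exp (2 * (Real.pi : ℂ) * Complex.I * (A ω : ℂ) * (t : ℂ)) ∂μ‖ ^ 2 ≤
          (∫ ω, Complex.exp (2 * (Real.pi : ℂ) * Complex.I * (β ω : ℂ) * (t : ℂ)) ∂μ').re) := by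
  have hK1 : (1:ℝ) ≤ (K:ℝ) := by exact_mod_cast hK
  have hN : (2*(K:ℝ)+1) ≠ 0 := by positivity
  -- part 3 first
  have hnull : μ {ω | A ω ∉ Finset.Icc (-(K:ℤ)) K} = 0 := by
    have heq : {ω | A ω ∉ Finset.Icc (-(K:ℤ)) K}
        = ⋃ x ∈ {x : ℤ | x ∉ Finset.Icc (-(K:ℤ)) K}, {ω | A ω = x} := by
      ext ω; simp
    rw [heq, measure_biUnion_null_iff (Set.to_countable _)]
    intro x hx
    simp only [Set.mem_setOf_eq, Finset.mem_Icc, not_and_or, not_le] at hx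
    have hd := hdist x
    rw [if_neg (by rw [abs_le]; omega)] at hd
    rcases (ENNReal.toReal_eq_zero_iff _).1 hd with h | h
    · exact h
    · exact absurd h (measure_ne_top μ _)
  have h3 : ∀ t : ℝ,
      ‖∫ ω, Complex.exp (2 * (Real.pi : ℂ) * Complex.I * (A ω : ℂ) * (t : ℂ)) ∂μ‖ ^ 2 ≤
        1 - 4 * (K : ℝ) / (2 * (K : ℝ) + 1) ^ 2 +
          (4 * (K : ℝ) / (2 * (K : ℝ) + 1) ^ 2) * Real.cos (2 * Real.pi * t) := by
    intro t
    have hint := int_finsupp μ A hA (Finset.Icc (-(K:ℤ)) K) hnull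
      (fun x : ℤ => Complex.exp (2 * (Real.pi : ℂ) * Complex.I * (x : ℂ) * (t : ℂ)))
    rw [hint]
    have hwt : ∑ x ∈ Finset.Icc (-(K:ℤ)) K, (μ {ω | A ω = x}).toReal •
          Complex.exp (2 * (Real.pi : ℂ) * Complex.I * (x : ℂ) * (t : ℂ))
        = (1 / (2*(K:ℝ)+1)) • ∑ x ∈ Finset.Icc (-(K:ℤ)) K,
            Complex.exp (2 * (Real.pi : ℂ) * Complex.I * (x : ℂ) * (t : ℂ)) := by
      rw [Finset.smul_sum]
      refine Finset.sum_congr rfl fun x hx => ?_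
      simp only [Finset.mem_Icc] at hx
      rw [hdist x, if_pos (by rw [abs_le]; omega)]
    rw [hwt]
    have hpos : (0:ℝ) < 2*(K:ℝ)+1 := by positivity
    rw [norm_smul, Real.norm_eq_abs, abs_of_pos (by positivity), mul_pow]
    rw [norm_sq_sum_exp K hK t]
    calc (1/(2*(K:ℝ)+1))^2 * ∑ a ∈ Finset.Icc (-(K:ℤ)) K, ∑ b ∈ Finset.Icc (-(K:ℤ)) K,
            Real.cos (((a:ℝ) - b) * (2 * Real.pi * t))
        ≤ (1/(2*(K:ℝ)+1))^2 * ((2*(K:ℝ)+1)^2 - 4*K + 4*K * Real.cos (2 * Real.pi * t)) :=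
          mul_le_mul_of_nonneg_left (cos_sum_bound K hK _) (by positivity)
      _ = 1 - 4 * (K : ℝ) / (2 * (K : ℝ) + 1) ^ 2 +
          (4 * (K : ℝ) / (2 * (K : ℝ) + 1) ^ 2) * Real.cos (2 * Real.pi * t) := by
          field_simp
  refine ⟨⟨⟨0, ?_⟩, ?_⟩, ?_, h3, ?_⟩
  · show (μ {ω | A ω = 0}).toReal = _
    rw [hdist 0, if_pos (by simp)]
  · rintro y ⟨x, rfl⟩
    simp only
    rw [hdist x]
    split_ifs
    · exact le_refl _
    · positivity
  · have hdiff : 1 - 4*(K:ℝ)/(2*(K:ℝ)+1)^2 - 1/(2*(K:ℝ)+1)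
        = (4*(K:ℝ)^2 - 2*K)/(2*(K:ℝ)+1)^2 := by field_simp; ring
    have hnn : (0:ℝ) ≤ (4*(K:ℝ)^2 - 2*K)/(2*(K:ℝ)+1)^2 :=
      div_nonneg (by nlinarith) (by positivity)
    linarith
  · intro Ω' _ μ' _ β hβ hb1 hbm1 hb0 t
    have hm : ∀ x : ℤ, MeasurableSet {ω | β ω = x} := fun x => hβ (measurableSet_singleton x)
    set U : Set Ω' := {ω | β ω = -1} ∪ ({ω | β ω = 0} ∪ {ω | β ω = 1}) with hU
    have hdisj1 : Disjoint {ω | β ω = 0} {ω | β ω = 1} := by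
      rw [Set.disjoint_left]; intro ω h1 h2; simp only [Set.mem_setOf_eq] at h1 h2; omega
    have hdisj2 : Disjoint {ω | β ω = -1} ({ω | β ω = 0} ∪ {ω | β ω = 1}) := by
      rw [Set.disjoint_left]; rintro ω h1 (h2 | h2) <;>
        simp only [Set.mem_setOf_eq] at h1 h2 <;> omega
    have hUmeas : MeasurableSet U := (hm (-1)).union ((hm 0).union (hm 1))
    have hmeasU : μ' U = μ' {ω | β ω = -1} + (μ' {ω | β ω = 0} + μ' {ω | β ω = 1}) := by
      rw [hU, measure_union hdisj2 ((hm 0).union (hm 1)), measure_union hdisj1 (hm 1)]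
    have hUone : μ' U = 1 := by
      have htop1 := measure_ne_top μ' {ω | β ω = -1}
      have htop2 := measure_ne_top μ' {ω | β ω = 0}
      have htop3 := measure_ne_top μ' {ω | β ω = 1}
      have htr : (μ' U).toReal = 1 := by
        rw [hmeasU, ENNReal.toReal_add htop1 (by finiteness), ENNReal.toReal_add htop2 htop3,
          hbm1, hb0, hb1]
        ring
      have hUtop : μ' U ≠ ⊤ := measure_ne_top μ' U
      rwa [ENNReal.toReal_eq_one_iff] at htr
    have hnull' : μ' {ω | β ω ∉ ({-1, 0, 1} : Finset ℤ)} = 0 := by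
      have heq : {ω | β ω ∉ ({-1, 0, 1} : Finset ℤ)} = Uᶜ := by
        ext ω
        simp only [Set.mem_setOf_eq, Finset.mem_insert, Finset.mem_singleton, Set.mem_compl_iff,
          hU, Set.mem_union]
      rw [heq, measure_compl hUmeas (measure_ne_top μ' U), hUone, measure_univ, tsub_self]
    have hint := int_finsupp μ' β hβ ({-1, 0, 1} : Finset ℤ) hnull'
      (fun x : ℤ => Complex.exp (2 * (Real.pi : ℂ) * Complex.I * (x : ℂ) * (t : ℂ)))
    rw [hint]
    have hsum : ∑ x ∈ ({-1, 0, 1} : Finset ℤ), (μ' {ω | β ω = x}).toReal •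
          Complex.exp (2 * (Real.pi : ℂ) * Complex.I * (x : ℂ) * (t : ℂ))
        = (μ' {ω | β ω = -1}).toReal •
            Complex.exp (2 * (Real.pi : ℂ) * Complex.I * ((-1 : ℤ) : ℂ) * (t : ℂ))
          + ((μ' {ω | β ω = 0}).toReal •
              Complex.exp (2 * (Real.pi : ℂ) * Complex.I * ((0 : ℤ) : ℂ) * (t : ℂ))
            + (μ' {ω | β ω = 1}).toReal •
              Complex.exp (2 * (Real.pi : ℂ) * Complex.I * ((1 : ℤ) : ℂ) * (t : ℂ))) := by
      rw [Finset.sum_insert (by decide), Finset.sum_insert (by decide), Finset.sum_singleton]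
    rw [hsum]
    simp only [Complex.add_re, Complex.real_smul, Complex.mul_re, Complex.ofReal_re,
      Complex.ofReal_im, zero_mul, sub_zero]
    rw [exp_re_eq (-1) t, exp_re_eq 0 t, exp_re_eq 1 t]
    rw [show (((-1:ℤ)):ℝ) * (2 * Real.pi * t) = -(2 * Real.pi * t) by push_cast; ring,
      Real.cos_neg,
      show (((0:ℤ)):ℝ) * (2 * Real.pi * t) = 0 by push_cast; ring, Real.cos_zero,
      show (((1:ℤ)):ℝ) * (2 * Real.pi * t) = 2 * Real.pi * t by push_cast; ring]
    rw [hbm1, hb0, hb1]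
    calc ‖∫ ω, Complex.exp (2 * (Real.pi : ℂ) * Complex.I * (A ω : ℂ) * (t : ℂ)) ∂μ‖ ^ 2
        ≤ 1 - 4 * (K : ℝ) / (2 * (K : ℝ) + 1) ^ 2 +
          (4 * (K : ℝ) / (2 * (K : ℝ) + 1) ^ 2) * Real.cos (2 * Real.pi * t) := h3 t
      _ = 2 * (K:ℝ) / (2 * (K:ℝ) + 1) ^ 2 * Real.cos (2 * Real.pi * t) +
          ((1 - 4 * (K:ℝ) / (2 * (K:ℝ) + 1) ^ 2) * 1 +
            2 * (K:ℝ) / (2 * (K:ℝ) + 1) ^ 2 * Real.cos (2 * Real.pi * t)) := by ring
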